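/- Let τ > 0 and let P(t) = Ric(t) + τ·g(t) along a solution of the Kähler-Ricci flow ∂g/∂t = −Ric on a Kähler manifold with nonnegative holomorphic bisectional curvature, satisfying Cao's Harnack estimate ∂R_{ij̄}/∂t + g^{kl̄}R_{il̄}R_{kj̄} ≥ 0 (as Hermitian forms). Then at each point, working in a unitary frame where g_{ij̄} = δ_{ij} and R_{ij̄} = λ_i δ_{ij}, one has ∂/∂t log( det P / det g ) ≥ Σ_i ( −λ_i²/(λ_i+τ) − τ + τ²/(λ_i+τ) + λ_i ) = 0, so det(Ric+τg)/det(g) is nondecreasing in t. -/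

import Mathlib

open Matrix
open scoped ComplexOrder

open Finset in
private lemma hasDerivAt_det_cols {n : ℕ} {A : ℝ → Matrix (Fin n) (Fin n) ℂ}
    {A' : Matrix (Fin n) (Fin n) ℂ} {t : ℝ}
    (h : ∀ i j, HasDerivAt (fun s => A s i j) (A' i j) t) :
    HasDerivAt (fun s => (A s).det)
      (∑ i, ((A t).updateCol i (fun k => A' k i)).det) t := by
  have h1 : HasDerivAt (fun s => (A s).det)
      (∑ σ : Equiv.Perm (Fin n), (Equiv.Perm.sign σ : ℂ) *
        ∑ i, (∏ j ∈ univ.erase i, A t (σ j) j) • A' (σ i) i) t := by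
    simp only [Matrix.det_apply']
    exact HasDerivAt.fun_sum fun σ _ =>
      ((HasDerivAt.fun_finsetProd (fun i _ => h (σ i) i)).const_mul _)
  convert h1 using 1
  simp only [Matrix.det_apply', Matrix.updateCol_apply]
  rw [Finset.sum_comm]
  refine Finset.sum_congr rfl fun σ _ => ?_
  rw [Finset.mul_sum]
  refine Finset.sum_congr rfl fun i _ => ?_
  rw [← Finset.mul_prod_erase _ _ (Finset.mem_univ i), if_pos rfl,
      Finset.prod_congr rfl (fun j hj => if_neg (Finset.ne_of_mem_erase hj))]
  rw [smul_eq_mul]; ring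

private lemma hasDerivAt_det_trace {n : ℕ} {A : ℝ → Matrix (Fin n) (Fin n) ℂ}
    {A' : Matrix (Fin n) (Fin n) ℂ} {t : ℝ}
    (h : ∀ i j, HasDerivAt (fun s => A s i j) (A' i j) t)
    (hu : IsUnit (A t).det) :
    HasDerivAt (fun s => (A s).det)
      ((A t).det * Matrix.trace ((A t)⁻¹ * A')) t := by
  have h1 := hasDerivAt_det_cols h
  convert h1 using 1
  have hadj : (A t).det • (A t)⁻¹ = (A t).adjugate := by
    rw [Matrix.inv_def, smul_smul, Ring.mul_inverse_cancel _ hu, one_smul]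
  calc (A t).det * Matrix.trace ((A t)⁻¹ * A')
      = Matrix.trace (((A t).det • (A t)⁻¹) * A') := by
        rw [Matrix.smul_mul, Matrix.trace_smul, smul_eq_mul]
    _ = Matrix.trace ((A t).adjugate * A') := by rw [hadj]
    _ = ∑ i, ((A t).updateCol i (fun k => A' k i)).det := by
        simp only [← Matrix.cramer_apply, Matrix.cramer_eq_adjugate_mulVec]
        simp [Matrix.trace, Matrix.diag, Matrix.mul_apply, Matrix.mulVec, dotProduct]

private lemma trace_nonneg_of_psd {n : ℕ} {M : Matrix (Fin n) (Fin n) ℂ}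
    (hM : M.PosSemidef) : 0 ≤ M.trace := by
  refine Finset.sum_nonneg fun i _ => ?_
  have h := hM.dotProduct_mulVec_nonneg (Pi.single i 1)
  simpa [dotProduct, Matrix.mulVec, Pi.single_apply] using h

open scoped MatrixOrder in
private lemma trace_mul_nonneg_of_psd {n : ℕ} {A B : Matrix (Fin n) (Fin n) ℂ}
    (hA : A.PosSemidef) (hB : B.PosSemidef) : 0 ≤ (A * B).trace := by
  have h1 : A * B = A * CFC.sqrt B * CFC.sqrt B := by
    rw [Matrix.mul_assoc, CFC.sqrt_mul_sqrt_self B hB.nonneg]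
  rw [h1, Matrix.trace_mul_cycle]
  refine trace_nonneg_of_psd ?_
  simpa [(CFC.sqrt_nonneg B).posSemidef.1.eq] using hA.conjTranspose_mul_mul_same (CFC.sqrt B)

private lemma posDef_real_smul {n : ℕ} {M : Matrix (Fin n) (Fin n) ℂ}
    (hM : M.PosDef) {τ : ℝ} (hτ : 0 < τ) : ((τ : ℂ) • M).PosDef := by
  refine Matrix.PosDef.of_dotProduct_mulVec_pos ?_ fun x hx => ?_
  · have := hM.1.eq
    unfold Matrix.IsHermitian
    rw [Matrix.conjTranspose_smul, hM.1.eq, Complex.star_def, Complex.conj_ofReal]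
  · have h0 := hM.dotProduct_mulVec_pos hx
    rw [Complex.lt_def] at h0 ⊢
    rw [Matrix.smul_mulVec, dotProduct_smul, smul_eq_mul]
    constructor
    · simp only [Complex.zero_re, Complex.mul_re, Complex.ofReal_re, Complex.ofReal_im,
        zero_mul, sub_zero]
      exact mul_pos hτ (by simpa using h0.1)
    · simp only [Complex.zero_im, Complex.mul_im, Complex.ofReal_re, Complex.ofReal_im,
        zero_mul, add_zero]
      rw [← h0.2]; simp

theorem stmt_15 (n : ℕ) (τ : ℝ) (hτ : 0 < τ)
    (g R R' : ℝ → Matrix (Fin n) (Fin n) ℂ)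
    -- g(t) and Ric(t) are Hermitian positive definite
    (hg : ∀ t, (g t).PosDef) (hR : ∀ t, (R t).PosDef)
    -- the Kähler-Ricci flow: ∂g/∂t = -Ric (entrywise derivatives)
    (hflow : ∀ t, ∀ i j : Fin n, HasDerivAt (fun s => g s i j) (-(R t i j)) t)
    -- R' is the time derivative of Ric (entrywise)
    (hR' : ∀ t, ∀ i j : Fin n, HasDerivAt (fun s => R s i j) (R' t i j) t)
    -- Cao's Harnack estimate: ∂Ric/∂t + Ric·g⁻¹·Ric ≥ 0 as Hermitian forms
    (hHarnack : ∀ t, (R' t + R t * (g t)⁻¹ * R t).PosSemidef) :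
    Monotone (fun t => ((R t + (τ : ℂ) • g t).det.re) / ((g t).det.re)) := by
  have hgu : ∀ t, IsUnit (g t).det := fun t => (hg t).det_pos.ne'.isUnit
  have hP : ∀ t, (R t + (τ : ℂ) • g t).PosDef :=
    fun t => (hR t).add (posDef_real_smul (hg t) hτ)
  have hPu : ∀ t, IsUnit (R t + (τ : ℂ) • g t).det := fun t => (hP t).det_pos.ne'.isUnit
  have main : ∀ t : ℝ, ∃ d : ℝ, 0 ≤ d ∧
      HasDerivAt (fun s => ((R s + (τ : ℂ) • g s).det.re) / ((g s).det.re)) d t := by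
    intro t
    set Pm : Matrix (Fin n) (Fin n) ℂ := R t + (τ : ℂ) • g t with hPm
    set P' : Matrix (Fin n) (Fin n) ℂ := R' t - (τ : ℂ) • R t with hP'
    have hentP : ∀ i j, HasDerivAt (fun s => (R s + (τ : ℂ) • g s) i j) (P' i j) t := by
      intro i j
      have h := (hR' t i j).fun_add ((hflow t i j).const_mul ((τ : ℂ)))
      simpa [hP', Matrix.add_apply, Matrix.smul_apply, Matrix.sub_apply, smul_eq_mul,
        mul_neg, sub_eq_add_neg] using h
    have hentg : ∀ i j, HasDerivAt (fun s => g s i j) ((-(R t)) i j) t := by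
      intro i j; simpa using hflow t i j
    have hdP := hasDerivAt_det_trace hentP (hPu t)
    have hdg := hasDerivAt_det_trace hentg (hgu t)
    have hu : HasDerivAt (fun s => (R s + (τ : ℂ) • g s).det.re)
        ((Pm.det * Matrix.trace (Pm⁻¹ * P')).re) t := by
      simpa [Function.comp_def, hPm] using Complex.reCLM.hasFDerivAt.comp_hasDerivAt t hdP
    have hv : HasDerivAt (fun s => (g s).det.re)
        (((g t).det * Matrix.trace ((g t)⁻¹ * (-(R t)))).re) t := by
      simpa [Function.comp_def] using Complex.reCLM.hasFDerivAt.comp_hasDerivAt t hdg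
    have hPdet := (hP t).det_pos
    have hgdet := (hg t).det_pos
    rw [Complex.lt_def] at hPdet hgdet
    have ha : 0 < Pm.det.re := by simpa [hPm] using hPdet.1
    have hb : 0 < (g t).det.re := by simpa using hgdet.1
    have haim : Pm.det.im = 0 := by simpa [hPm] using hPdet.2.symm
    have hbim : (g t).det.im = 0 := by simpa using hgdet.2.symm
    have hvne : (g t).det.re ≠ 0 := hb.ne'
    refine ⟨_, ?_, hu.div hv hvne⟩
    have e1 : R t * (g t)⁻¹ * Pm = R t * (g t)⁻¹ * R t + (τ : ℂ) • R t := by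
      rw [hPm, mul_add, mul_smul_comm, Matrix.mul_assoc (R t) (g t)⁻¹ (g t),
        Matrix.nonsing_inv_mul _ (hgu t), Matrix.mul_one]
    have e2 : Matrix.trace (Pm⁻¹ * (R t * (g t)⁻¹ * Pm)) = Matrix.trace ((g t)⁻¹ * R t) := by
      rw [Matrix.trace_mul_comm, Matrix.mul_assoc, Matrix.mul_nonsing_inv _ (hPu t),
        Matrix.mul_one, Matrix.trace_mul_comm]
    have e3 : R' t + R t * (g t)⁻¹ * R t = P' + R t * (g t)⁻¹ * Pm := by
      rw [e1, hP']; abel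
    have key : Matrix.trace (Pm⁻¹ * P') + Matrix.trace ((g t)⁻¹ * R t)
        = Matrix.trace (Pm⁻¹ * (R' t + R t * (g t)⁻¹ * R t)) := by
      rw [e3, mul_add, Matrix.trace_add, e2]
    have hnn : 0 ≤ Matrix.trace (Pm⁻¹ * (R' t + R t * (g t)⁻¹ * R t)) :=
      trace_mul_nonneg_of_psd (hP t).inv.posSemidef (hHarnack t)
    have hnnre : 0 ≤ (Matrix.trace (Pm⁻¹ * P')).re + (Matrix.trace ((g t)⁻¹ * R t)).re := by
      have h4 := (Complex.le_def.mp hnn).1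
      rw [← key] at h4
      simpa [Complex.add_re] using h4
    apply div_nonneg _ (sq_nonneg _)
    rw [Complex.mul_re, Complex.mul_re, haim, hbim, Matrix.mul_neg, Matrix.trace_neg]
    simp only [zero_mul, sub_zero, Complex.neg_re]
    nlinarith [mul_nonneg (mul_nonneg ha.le hb.le) hnnre]
  have hdiff : Differentiable ℝ (fun t => ((R t + (τ : ℂ) • g t).det.re) / ((g t).det.re)) :=
    fun t => ((main t).choose_spec.2).differentiableAt
  refine monotone_of_deriv_nonneg hdiff fun t => ?_
  obtain ⟨d, hd0, hd⟩ := main t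
  rw [hd.deriv]; exact hd0
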